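/- arXiv:2107.03132 — 3 statements merged into one kernel-verified Lean document; each statement's English description precedes it below -/
import Mathlib

section
/- Let G be a finite group with G/[G,G] cyclic and let χ ∈ Irr(G). Then the restriction of χ to [G,G] is irreducible if and only if χη ≠ χ for every nontrivial linear character η of G. -/
open scoped BigOperators

/-- `χ : G → ℂ` is an irreducible (complex) character of the group `G`:
it is the character of some simple finite-dimensional complex representation. -/
def IsIrrChar (G : Type) [Group G] (χ : G → ℂ) : Prop :=
  ∃ V : FDRep ℂ G, CategoryTheory.Simple V ∧ FDRep.character V = χ

/-- The number of irreducible constituents of the restriction of `χ` to the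
subgroup `N` of the finite group `G`, i.e. the number of irreducible characters
of `N` having nonzero inner product with the restriction of `χ`. -/
noncomputable def numConstituents (G : Type) [Group G] [Fintype G] (N : Subgroup G)
    (χ : G → ℂ) : ℕ :=
  letI : Fintype N := Fintype.ofFinite N
  {ψ : N → ℂ | IsIrrChar N ψ ∧ (∑ n : N, χ (n : G) * (starRingEnd ℂ) (ψ n)) ≠ 0}.ncard

section Aux

set_option linter.unusedSectionVars false

open CategoryTheory Module Representation
open scoped Classical
noncomputable section
variable {H : Type} [Group H] [Fintype H]

def homEquivInv (X Y : FDRep ℂ H) :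
    (Representation.linHom X.ρ Y.ρ).invariants ≃ₗ[ℂ] (X ⟶ Y) where
  toFun Φ := ⟨InducedCategory.homMk (ModuleCat.ofHom Φ.val), fun g => by
    have h := LinearMap.congr_fun (Φ.property g)
    ext x
    have h2 := h (X.ρ g x)
    simp only [Representation.linHom_apply, LinearMap.comp_apply] at h2
    have h3 : X.ρ g⁻¹ (X.ρ g x) = x := by
      rw [← LinearMap.comp_apply, ← Module.End.mul_eq_comp, ← map_mul, inv_mul_cancel, map_one,
        Module.End.one_apply]
    rw [h3] at h2
    show (↑Φ : X →ₗ[ℂ] Y) (X.ρ g x) = Y.ρ g ((↑Φ : X →ₗ[ℂ] Y) x)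
    rw [← h2]⟩
  map_add' _ _ := rfl
  map_smul' _ _ := rfl
  invFun f := ⟨f.hom.hom.hom, fun g => by
    have h := LinearMap.congr_fun (congrArg (fun h => h.hom.hom) (f.comm g))
    ext x
    have h2 := h (X.ρ g⁻¹ x)
    have h2' : (f.hom.hom.hom : X →ₗ[ℂ] Y) (X.ρ g (X.ρ g⁻¹ x)) = Y.ρ g ((f.hom.hom.hom : X →ₗ[ℂ] Y) (X.ρ g⁻¹ x)) := h2
    have h3 : X.ρ g (X.ρ g⁻¹ x) = x := by
      rw [← LinearMap.comp_apply, ← Module.End.mul_eq_comp, ← map_mul, mul_inv_cancel, map_one,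
        Module.End.one_apply]
    show Y.ρ g ((f.hom.hom.hom : X →ₗ[ℂ] Y) (X.ρ g⁻¹ x)) = (f.hom.hom.hom : X →ₗ[ℂ] Y) x
    rw [← h2', h3]⟩
  left_inv _ := rfl
  right_inv _ := by ext; rfl

lemma pairing_eq_finrank_hom (X Y : FDRep ℂ H) :
    (Fintype.card H : ℂ)⁻¹ • ∑ g : H, X.character g * Y.character g⁻¹
      = (finrank ℂ (Y ⟶ X) : ℂ) := by
  letI : Invertible ((Fintype.card H : ℂ)) :=
    invertibleOfNonzero (Nat.cast_ne_zero.2 Fintype.card_ne_zero)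
  rw [← invOf_eq_inv]
  conv_lhs =>
    enter [2, 2, g]
    rw [mul_comm, ← FDRep.char_dual, ← Pi.mul_apply, ← FDRep.char_tensor]
    rw [FDRep.char_iso (FDRep.dualTensorIsoLinHom Y.ρ X)]
  rw [invOf_eq_inv, smul_eq_mul, ← Nat.card_eq_fintype_card, FDRep.average_char_eq_finrank_invariants]
  rw [show (FDRep.of (linHom Y.ρ X.ρ)).ρ = linHom Y.ρ X.ρ from FDRep.of_ρ' (linHom Y.ρ X.ρ)]
  exact_mod_cast (homEquivInv Y X).finrank_eq

lemma rho_inv_self_apply (W : FDRep ℂ H) (g : H) (x : W) : W.ρ g⁻¹ (W.ρ g x) = x := by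
  rw [← LinearMap.comp_apply, ← Module.End.mul_eq_comp, ← map_mul, inv_mul_cancel, map_one,
    Module.End.one_apply]

lemma rho_self_inv_apply (W : FDRep ℂ H) (g : H) (x : W) : W.ρ g (W.ρ g⁻¹ x) = x := by
  rw [← LinearMap.comp_apply, ← Module.End.mul_eq_comp, ← map_mul, mul_inv_cancel, map_one,
    Module.End.one_apply]

lemma simple_of_finrank_end_one (W : FDRep ℂ H) (h1 : finrank ℂ (W ⟶ W) = 1) :
    CategoryTheory.Simple W := by
  letI : Invertible ((Fintype.card H : ℂ)) :=
    invertibleOfNonzero (Nat.cast_ne_zero.2 Fintype.card_ne_zero)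
  have hinv : finrank ℂ (Representation.linHom W.ρ W.ρ).invariants = 1 := by
    rw [(homEquivInv W W).finrank_eq]; exact h1
  -- W is nontrivial
  have hW : Nontrivial W := by
    by_contra hW
    rw [not_nontrivial_iff_subsingleton] at hW
    have : Subsingleton (W →ₗ[ℂ] W) := ⟨fun a b => by ext x; exact Subsingleton.elim _ _⟩
    have : Subsingleton (Representation.linHom W.ρ W.ρ).invariants :=
      ⟨fun a b => Subtype.ext (Subsingleton.elim _ _)⟩
    rw [finrank_zero_of_subsingleton] at hinv
    omega
  have idmem : LinearMap.id ∈ (Representation.linHom W.ρ W.ρ).invariants := by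
    intro g
    rw [Representation.linHom_apply]
    ext x
    simp only [LinearMap.comp_apply, LinearMap.id_apply, LinearMap.id_coe, id_eq]
    exact rho_self_inv_apply W g x
  have idne : (⟨LinearMap.id, idmem⟩ : (Representation.linHom W.ρ W.ρ).invariants) ≠ 0 := by
    intro hid
    obtain ⟨x, hx⟩ := exists_ne (0 : W)
    have := congrArg (fun Φ => Φ.val x) hid
    simp only [LinearMap.id_apply] at this
    exact hx this
  -- every invariant is a scalar multiple of the identity
  have hscal : ∀ Φ : W →ₗ[ℂ] W, Φ ∈ (Representation.linHom W.ρ W.ρ).invariants →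
      ∃ c : ℂ, Φ = c • LinearMap.id := by
    intro Φ hΦ
    have hsp : Submodule.span ℂ {(⟨LinearMap.id, idmem⟩ :
        (Representation.linHom W.ρ W.ρ).invariants)} = ⊤ :=
      Submodule.eq_top_of_finrank_eq (by rw [finrank_span_singleton idne, hinv])
    have := hsp ▸ Submodule.mem_top
      (x := (⟨Φ, hΦ⟩ : (Representation.linHom W.ρ W.ρ).invariants))
    obtain ⟨c, hc⟩ := Submodule.mem_span_singleton.1 this
    exact ⟨c, by simpa [Subtype.ext_iff] using hc.symm⟩
  -- invariant submodules are trivial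
  have hdich : ∀ p : Submodule ℂ W, (∀ (g : H) (x : W), x ∈ p → W.ρ g x ∈ p) →
      p = ⊥ ∨ p = ⊤ := by
    intro p hp
    obtain ⟨q, hq⟩ := Submodule.exists_isCompl p
    set pr : W →ₗ[ℂ] W := p.subtype ∘ₗ p.projectionOnto q hq with hpr
    set Φ : W →ₗ[ℂ] W := Representation.averageMap (Representation.linHom W.ρ W.ρ) pr with hΦdef
    have hΦmem := Representation.averageMap_invariant (Representation.linHom W.ρ W.ρ) pr
    have hΦ : ∀ v : W, Φ v = ⅟(Fintype.card H : ℂ) •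
        ∑ g : H, W.ρ g (pr (W.ρ g⁻¹ v)) := by
      intro v
      rw [hΦdef, Representation.averageMap, GroupAlgebra.average, map_smul, map_sum]
      simp only [MonoidAlgebra.of_apply, Representation.asAlgebraHom_single_one]
      simp [Representation.linHom_apply]
    have hmemp : ∀ v : W, Φ v ∈ p := by
      intro v
      rw [hΦ]
      refine Submodule.smul_mem _ _ (Submodule.sum_mem _ fun g _ => ?_)
      exact hp g _ (Submodule.coe_mem _)
    have hfix : ∀ v ∈ p, Φ v = v := by
      intro v hv
      rw [hΦ]
      have : ∀ g : H, W.ρ g (pr (W.ρ g⁻¹ v)) = v := by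
        intro g
        have hmem : W.ρ g⁻¹ v ∈ p := hp g⁻¹ v hv
        have : pr (W.ρ g⁻¹ v) = W.ρ g⁻¹ v := by
          rw [hpr]
          simp only [LinearMap.comp_apply, Submodule.subtype_apply]
          rw [show W.ρ g⁻¹ v = ((⟨W.ρ g⁻¹ v, hmem⟩ : p) : W) from rfl]
          rw [Submodule.projectionOnto_apply_left]
        rw [this, rho_self_inv_apply]
      simp only [this, Finset.sum_const, Finset.card_univ]
      rw [← Nat.cast_smul_eq_nsmul ℂ, smul_smul, invOf_mul_self, one_smul]
    obtain ⟨c, hc⟩ := hscal Φ hΦmem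
    by_cases hc0 : c = 0
    · left
      rw [eq_bot_iff]
      intro v hv
      have := hfix v hv
      rw [hc, hc0] at this
      simpa using this.symm
    · right
      rw [eq_top_iff]
      intro v _
      have h1 : Φ v = c • v := by rw [hc]; rfl
      have := hmemp v
      rw [h1] at this
      have := p.smul_mem c⁻¹ this
      rwa [smul_smul, inv_mul_cancel₀ hc0, one_smul] at this
  -- now prove simplicity
  constructor
  intro Y f m
  constructor
  · intro hiso h0
    obtain ⟨x, hx⟩ := exists_ne (0 : W)
    have hid : 𝟙 W = (0 : W ⟶ W) := by
      have h2 := congrArg (fun t => CategoryTheory.inv f ≫ t) h0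
      simpa using h2
    have := congrArg (fun (φ : W ⟶ W) => φ.hom x) hid
    simp only [Action.id_hom, Action.zero_hom] at this
    exact hx this
  · intro h0
    -- injectivity
    have m1 : Mono (((Action.forget (FGModuleCat ℂ) (MonCat.of H)) ⋙
        (forget₂ (FGModuleCat ℂ) (ModuleCat ℂ))).map f) := inferInstance
    have hinj : Function.Injective (f.hom.hom.hom : Y →ₗ[ℂ] W) :=
      (ModuleCat.mono_iff_injective _).1 m1
    -- surjectivity
    have hfne : (f.hom.hom.hom : Y →ₗ[ℂ] W) ≠ 0 := by
      intro hh
      exact h0 (Action.hom_ext f 0 (FGModuleCat.hom_ext hh))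
    have hrinv : ∀ (g : H), ∀ x ∈ LinearMap.range (f.hom.hom.hom : Y →ₗ[ℂ] W),
        W.ρ g x ∈ LinearMap.range (f.hom.hom.hom : Y →ₗ[ℂ] W) := by
      rintro g x ⟨y, rfl⟩
      exact ⟨Y.ρ g y, LinearMap.congr_fun (congrArg (fun h => h.hom.hom) (f.comm g)) y⟩
    have hrange : LinearMap.range (f.hom.hom.hom : Y →ₗ[ℂ] W) = ⊤ := by
      rcases hdich (LinearMap.range (f.hom.hom.hom : Y →ₗ[ℂ] W)) hrinv with hbot | htop
      · exact absurd (LinearMap.range_eq_bot.1 hbot) hfne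
      · exact htop
    have hbij : Function.Bijective (f.hom.hom.hom : Y →ₗ[ℂ] W) :=
      ⟨hinj, LinearMap.range_eq_top.1 hrange⟩
    set e := LinearEquiv.ofBijective (f.hom.hom.hom : Y →ₗ[ℂ] W) hbij with he
    have h2 : ∀ (g : H) (x : Y), (f.hom.hom.hom : Y →ₗ[ℂ] W) (Y.ρ g x) = W.ρ g ((f.hom.hom.hom : Y →ₗ[ℂ] W) x) :=
      fun g x => LinearMap.congr_fun (congrArg (fun h => h.hom.hom) (f.comm g)) x
    refine ⟨⟨⟨InducedCategory.homMk (ModuleCat.ofHom e.symm.toLinearMap), fun g => ?_⟩, ?_, ?_⟩⟩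
    · ext x
      show e.symm (W.ρ g x) = Y.ρ g (e.symm x)
      apply hinj
      rw [show (f.hom.hom.hom : Y →ₗ[ℂ] W) (e.symm (W.ρ g x)) = W.ρ g x from e.apply_symm_apply _,
        h2 g (e.symm x), show (f.hom.hom.hom : Y →ₗ[ℂ] W) (e.symm x) = x from e.apply_symm_apply _]
    · apply Action.hom_ext
      ext x
      exact e.symm_apply_apply x
    · apply Action.hom_ext
      ext x
      exact e.apply_symm_apply x


lemma my_orthonormal (X Y : FDRep ℂ H) (hX : CategoryTheory.Simple X)
    (hY : CategoryTheory.Simple Y) :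
    (Fintype.card H : ℂ)⁻¹ • ∑ g : H, X.character g * Y.character g⁻¹
      = if Nonempty (X ≅ Y) then 1 else 0 := by
  haveI := hX; haveI := hY
  rw [pairing_eq_finrank_hom, FDRep.finrank_hom_simple_simple Y X]
  by_cases hne : Nonempty (X ≅ Y)
  · have h2 : Nonempty (Y ≅ X) := ⟨hne.some.symm⟩
    rw [if_pos h2, if_pos hne]; norm_num
  · have h2 : ¬ Nonempty (Y ≅ X) := fun ⟨i⟩ => hne ⟨i.symm⟩
    rw [if_neg h2, if_neg hne]; norm_num

lemma simple_pairing_one (X : FDRep ℂ H) (hX : CategoryTheory.Simple X) :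
    (Fintype.card H : ℂ)⁻¹ • ∑ g : H, X.character g * X.character g⁻¹ = 1 := by
  rw [my_orthonormal X X hX hX, if_pos ⟨Iso.refl X⟩]

/-- twist of a representation by a linear character -/
def twist (X : FDRep ℂ H) (η : H →* ℂˣ) : FDRep ℂ H :=
  FDRep.of
    { toFun := fun g => (η g : ℂ) • X.ρ g
      map_one' := by simp
      map_mul' := fun g h => by
        show (η (g * h) : ℂ) • X.ρ (g * h) = ((η g : ℂ) • X.ρ g) * ((η h : ℂ) • X.ρ h)
        rw [map_mul, map_mul, Units.val_mul, smul_mul_smul_comm] }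

lemma twist_ρ (X : FDRep ℂ H) (η : H →* ℂˣ) (g : H) :
    (twist X η).ρ g = (η g : ℂ) • X.ρ g := rfl

lemma twist_character (X : FDRep ℂ H) (η : H →* ℂˣ) (g : H) :
    (twist X η).character g = (η g : ℂ) * X.character g := by
  show (LinearMap.trace ℂ _) ((η g : ℂ) • X.ρ g) = _
  rw [map_smul]
  rfl

lemma twist_linHom (X : FDRep ℂ H) (η : H →* ℂˣ) :
    Representation.linHom (twist X η).ρ (twist X η).ρ = Representation.linHom X.ρ X.ρ := by
  ext g f x
  revert f x
  show ∀ (f : X →ₗ[ℂ] X) (x : X), ((η g : ℂ) • X.ρ g) (f (((η g⁻¹ : ℂ) • X.ρ g⁻¹) x)) = ((Representation.linHom X.ρ X.ρ) g f) x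
  intro f x
  rw [Representation.linHom_apply]
  simp only [LinearMap.smul_apply, LinearMap.comp_apply, map_smul, smul_smul]
  have hunit : (η g⁻¹ : ℂ) * (η g : ℂ) = 1 := by
    rw [← Units.val_mul, ← map_mul, inv_mul_cancel, map_one, Units.val_one]
  rw [hunit, one_smul]

lemma twist_simple (X : FDRep ℂ H) (hX : CategoryTheory.Simple X) (η : H →* ℂˣ) :
    CategoryTheory.Simple (twist X η) := by
  apply simple_of_finrank_end_one
  haveI := hX
  have h1 : finrank ℂ (X ⟶ X) = 1 := CategoryTheory.finrank_endomorphism_simple_eq_one ℂ X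
  rw [← (homEquivInv X X).finrank_eq] at h1
  rw [← (homEquivInv (twist X η) (twist X η)).finrank_eq, twist_linHom]
  exact h1

section Chars
variable (G : Type) [Group G] [Fintype G]

lemma finite_abelianization : Finite (Abelianization G) := Quotient.finite _

lemma hasEnough : HasEnoughRootsOfUnity ℂ (Monoid.exponent (Abelianization G)) := by
  haveI : Finite (Abelianization G) := finite_abelianization G
  haveI : NeZero ((Monoid.exponent (Abelianization G) : ℂ)) :=
    ⟨Nat.cast_ne_zero.2 Monoid.exponent_ne_zero_of_finite⟩
  infer_instance

lemma finite_homs : Finite (G →* ℂˣ) := by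
  haveI : Finite (Abelianization G) := finite_abelianization G
  haveI := hasEnough G
  obtain ⟨e⟩ := CommGroup.monoidHom_mulEquiv_of_hasEnoughRootsOfUnity (Abelianization G) ℂ
  haveI : Finite (Abelianization G →* ℂˣ) := Finite.of_equiv _ e.toEquiv.symm
  exact Finite.of_equiv _ (Abelianization.lift (G := G) (A := ℂˣ)).symm

lemma card_homs : Nat.card (G →* ℂˣ) = (commutator G).index := by
  haveI : Finite (Abelianization G) := finite_abelianization G
  haveI := hasEnough G
  obtain ⟨e⟩ := CommGroup.monoidHom_mulEquiv_of_hasEnoughRootsOfUnity (Abelianization G) ℂ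
  calc Nat.card (G →* ℂˣ) = Nat.card (Abelianization G →* ℂˣ) :=
        Nat.card_congr Abelianization.lift
    _ = Nat.card (Abelianization G) := Nat.card_congr e.toEquiv
    _ = (commutator G).index := rfl

lemma exists_sep {g : G} (hg : g ∉ commutator G) : ∃ η : G →* ℂˣ, η g ≠ 1 := by
  haveI : Finite (Abelianization G) := finite_abelianization G
  haveI := hasEnough G
  have h1 : Abelianization.of g ≠ 1 := by
    rw [Ne, show (Abelianization.of g = 1) ↔ g ∈ commutator G from QuotientGroup.eq_one_iff g]
    exact hg
  obtain ⟨φ, hφ⟩ := CommGroup.exists_apply_ne_one_of_hasEnoughRootsOfUnity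
    (Abelianization G) ℂ h1
  exact ⟨φ.comp Abelianization.of, hφ⟩

lemma sum_linear_chars [Fintype (G →* ℂˣ)] (g : G) :
    ∑ η : G →* ℂˣ, ((η g : ℂˣ) : ℂ) =
      if g ∈ commutator G then (Fintype.card (G →* ℂˣ) : ℂ) else 0 := by
  classical
  by_cases hg : g ∈ commutator G
  · rw [if_pos hg]
    have : ∀ η : G →* ℂˣ, ((η g : ℂˣ) : ℂ) = 1 := by
      intro η
      have := Abelianization.commutator_subset_ker η hg
      rw [MonoidHom.mem_ker] at this
      rw [this, Units.val_one]
    simp [this]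
  · rw [if_neg hg]
    obtain ⟨η₀, hη₀⟩ := exists_sep G hg
    have key : ∑ η : G →* ℂˣ, ((η g : ℂˣ) : ℂ)
        = (∑ η : G →* ℂˣ, ((η g : ℂˣ) : ℂ)) * ((η₀ g : ℂˣ) : ℂ) := by
      rw [Finset.sum_mul]
      exact (Fintype.sum_equiv (Equiv.mulRight η₀) _ _ (fun η => by
        simp [Units.val_mul])).symm
    have h2 : (∑ η : G →* ℂˣ, ((η g : ℂˣ) : ℂ)) * (((η₀ g : ℂˣ) : ℂ) - 1) = 0 := by
      rw [mul_sub, ← key, mul_one, sub_self]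
    rcases mul_eq_zero.1 h2 with h | h
    · exact h
    · exfalso
      apply hη₀
      have : ((η₀ g : ℂˣ) : ℂ) = 1 := by linear_combination h
      exact Units.ext this
end Chars

theorem res_irreducible_iff_stabilizer_trivial'
    (G : Type) [Group G] [Fintype G] (hcyc : IsCyclic (Abelianization G))
    (χ : G → ℂ) (hχ : ∃ V : FDRep ℂ G, CategoryTheory.Simple V ∧ FDRep.character V = χ) :
    (∃ U : FDRep ℂ (commutator G), CategoryTheory.Simple U ∧
        FDRep.character U = (fun n : commutator G => χ (n : G))) ↔
      ∀ η : G →* ℂˣ, η ≠ 1 → (fun g => χ g * (η g : ℂ)) ≠ χ := by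
  classical
  obtain ⟨V, hV, hVchar⟩ := hχ
  letI : Fintype (commutator G) := Fintype.ofFinite _
  haveI : Finite (G →* ℂˣ) := finite_homs G
  letI : Fintype (G →* ℂˣ) := Fintype.ofFinite _
  set N := commutator G with hNdef
  let W : FDRep ℂ N := (Action.res (FGModuleCat ℂ) N.subtype).obj V
  have hWchar : ∀ n : N, W.character n = χ (n : G) := fun n => by
    rw [← hVchar]; rfl
  set P : (G →* ℂˣ) → Prop := fun η => (fun g => χ g * (η g : ℂ)) = χ with hPdef
  set S : ℂ := ∑ n : N, χ (n : G) * χ ((n : G)⁻¹) with hSdef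
  have hGne : (Fintype.card G : ℂ) ≠ 0 := Nat.cast_ne_zero.2 Fintype.card_ne_zero
  have hNne : (Fintype.card N : ℂ) ≠ 0 := Nat.cast_ne_zero.2 Fintype.card_ne_zero
  have hcard : (Fintype.card (G →* ℂˣ)) * Fintype.card N = Fintype.card G := by
    have h1 : Nat.card N * N.index = Nat.card G := Subgroup.card_mul_index N
    have h2 : Nat.card (G →* ℂˣ) = N.index := card_homs G
    rw [← h2] at h1
    simp only [Nat.card_eq_fintype_card] at h1
    rw [← h1]; ring
  have hWpair : (Fintype.card N : ℂ)⁻¹ • S = (finrank ℂ (W ⟶ W) : ℂ) := by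
    rw [← pairing_eq_finrank_hom W W]
    congr 1
    refine Finset.sum_congr rfl fun n _ => ?_
    rw [hWchar n, hWchar n⁻¹]
    norm_num
  have hchar : ∀ η : G →* ℂˣ, FDRep.character (twist V η) = fun g => χ g * (η g : ℂ) :=
    fun η => funext fun g => by rw [twist_character, ← hVchar]; ring
  have hiff : ∀ η : G →* ℂˣ, Nonempty (twist V η ≅ V) ↔ P η := by
    intro η
    constructor
    · rintro ⟨i⟩
      have h0 := FDRep.char_iso i
      rw [hchar, hVchar] at h0
      exact h0
    · intro hp
      by_contra hni
      have h0 := my_orthonormal (twist V η) V (twist_simple V hV η) hV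
      rw [if_neg hni] at h0
      have h2 : FDRep.character (twist V η) = V.character := by rw [hchar, hp, hVchar]
      rw [h2] at h0
      exact one_ne_zero ((simple_pairing_one V hV).symm.trans h0)
  have hper : ∀ η : G →* ℂˣ, (Fintype.card G : ℂ)⁻¹ •
      (∑ g : G, (χ g * ((η g : ℂˣ) : ℂ)) * χ g⁻¹) = if P η then 1 else 0 := by
    intro η
    have h0 := my_orthonormal (twist V η) V (twist_simple V hV η) hV
    simp only [hchar, hVchar] at h0
    rw [h0, if_congr (hiff η) rfl rfl]
  have hbig : ((Finset.univ.filter P).card : ℂ) = (Fintype.card N : ℂ)⁻¹ • S := by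
    rw [← Finset.sum_boole]
    calc ∑ η : G →* ℂˣ, (if P η then (1 : ℂ) else 0)
        = ∑ η : G →* ℂˣ, (Fintype.card G : ℂ)⁻¹ •
            (∑ g : G, (χ g * ((η g : ℂˣ) : ℂ)) * χ g⁻¹) :=
          Finset.sum_congr rfl fun η _ => (hper η).symm
      _ = (Fintype.card G : ℂ)⁻¹ •
            ∑ g : G, ∑ η : G →* ℂˣ, (χ g * ((η g : ℂˣ) : ℂ)) * χ g⁻¹ := by
          rw [← Finset.smul_sum, Finset.sum_comm]
      _ = (Fintype.card G : ℂ)⁻¹ •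
            ∑ g : G, (χ g * χ g⁻¹) * ∑ η : G →* ℂˣ, ((η g : ℂˣ) : ℂ) := by
          congr 1
          refine Finset.sum_congr rfl fun g _ => ?_
          rw [Finset.mul_sum]
          exact Finset.sum_congr rfl fun η _ => by ring
      _ = (Fintype.card G : ℂ)⁻¹ •
            ∑ g : G, (if g ∈ N then (χ g * χ g⁻¹) * (Fintype.card (G →* ℂˣ) : ℂ) else 0) := by
          congr 1
          refine Finset.sum_congr rfl fun g _ => ?_
          rw [sum_linear_chars G g, mul_ite, mul_zero]
      _ = (Fintype.card G : ℂ)⁻¹ •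
            ((∑ n : N, χ (n : G) * χ ((n : G))⁻¹) * (Fintype.card (G →* ℂˣ) : ℂ)) := by
          congr 1
          rw [← Finset.sum_filter, ← Finset.sum_mul]
          congr 1
          exact Finset.sum_subtype _ (by simp) (fun g => χ g * χ g⁻¹)
      _ = (Fintype.card N : ℂ)⁻¹ • S := by
          rw [hSdef, smul_eq_mul, smul_eq_mul]
          have : ((Fintype.card (G →* ℂˣ) : ℕ) : ℂ) * (Fintype.card N : ℂ)
              = (Fintype.card G : ℂ) := by exact_mod_cast congrArg Nat.cast hcard
          field_simp
          rw [← this]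
          ring
  have hP1 : P 1 := funext fun g => by simp
  have h1mem : (1 : G →* ℂˣ) ∈ Finset.univ.filter P :=
    Finset.mem_filter.2 ⟨Finset.mem_univ _, hP1⟩
  constructor
  · rintro ⟨U, hU, hUchar⟩ η hη1 hPη
    have hUpair := simple_pairing_one U hU
    have hSone : (Fintype.card N : ℂ)⁻¹ • S = 1 := by
      rw [← hUpair]
      congr 1
      refine Finset.sum_congr rfl fun n _ => ?_
      have h1 : U.character n = χ (n : G) := by rw [hUchar]
      have h2 : U.character n⁻¹ = χ ((n : G))⁻¹ := by rw [hUchar]; norm_num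
      rw [h1, h2]
    have hcard1 : (Finset.univ.filter P).card = 1 := by
      have := hbig.trans hSone
      exact_mod_cast this
    obtain ⟨a, ha⟩ := Finset.card_eq_one.1 hcard1
    have hηmem : η ∈ Finset.univ.filter P := Finset.mem_filter.2 ⟨Finset.mem_univ _, hPη⟩
    rw [ha, Finset.mem_singleton] at h1mem hηmem
    exact hη1 (hηmem.trans h1mem.symm)
  · intro hstab
    have hsub : Finset.univ.filter P = {1} := by
      apply Finset.Subset.antisymm
      · intro η hη
        rw [Finset.mem_singleton]
        by_contra hne
        exact hstab η hne (Finset.mem_filter.1 hη).2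
      · rw [Finset.singleton_subset_iff]
        exact h1mem
    have hfr : finrank ℂ (W ⟶ W) = 1 := by
      have := hbig.trans hWpair  -- wrong direction; fix below
      rw [hsub, Finset.card_singleton] at this
      exact_mod_cast this.symm
    exact ⟨W, simple_of_finrank_end_one W hfr, funext fun n => hWchar n⟩


end

end Aux

/-- If `G/[G,G]` is cyclic and `χ ∈ Irr(G)`, then the restriction of `χ` to
`[G,G]` is irreducible iff `χη ≠ χ` for every nontrivial linear character `η` of `G`. -/
theorem res_irreducible_iff_stabilizer_trivial
    (G : Type) [Group G] [Fintype G] (hcyc : IsCyclic (Abelianization G))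
    (χ : G → ℂ) (hχ : IsIrrChar G χ) :
    IsIrrChar (commutator G) (fun n : commutator G => χ (n : G)) ↔
      ∀ η : G →* ℂˣ, η ≠ 1 → (fun g => χ g * (η g : ℂ)) ≠ χ := by
  exact res_irreducible_iff_stabilizer_trivial' G hcyc χ hχ
end

section
/- For ε = ±1 and k ≥ 1, the generating function of the numbers c_{n,k}(q) satisfies the formal power series identity Σ_{n≥0} c_{n,k}(q) tⁿ = ∏_{r=1}^{∞} (1 − ε t^{kr})/(1 − q t^{kr}). -/
open scoped BigOperators Classical

/-- The partition sum `c_{n,k}(q)` (for `ε = ±1`): the sum over partitions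
`ν = (1^{n₁} 2^{n₂} ⋯)` of `n` with all multiplicities `nᵢ` divisible by `k` of
`∏_{nᵢ>0} (q^{nᵢ/k} - ε q^{nᵢ/k - 1})`. -/
noncomputable def cnk (n k : ℕ) (ε q : ℤ) : ℤ :=
  ∑ ν : Nat.Partition n,
    if ∀ i, k ∣ Multiset.count i ν.parts then
      ∏ i ∈ Finset.range (n + 1),
        if 0 < Multiset.count i ν.parts then
          q ^ (Multiset.count i ν.parts / k) - ε * q ^ (Multiset.count i ν.parts / k - 1)
        else 1
    else 0

open PowerSeries Finset

noncomputable def wt (ε q : ℤ) (m : ℕ) : ℤ := if m = 0 then 1 else q ^ m - ε * q ^ (m - 1)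

noncomputable def G (d : ℕ) (ε q : ℤ) : PowerSeries ℤ :=
  PowerSeries.mk fun n => if d ∣ n then wt ε q (n / d) else 0

noncomputable def pToF {n : ℕ} (ν : Nat.Partition n) : ℕ →₀ ℕ where
  support := ν.parts.toFinset
  toFun := fun i => Multiset.count i ν.parts * i
  mem_support_toFun := fun i => by
    simp only [Multiset.mem_toFinset]
    constructor
    · intro h
      exact Nat.mul_ne_zero (Multiset.count_ne_zero.mpr h) (ν.parts_pos h).ne'
    · intro h
      exact Multiset.count_ne_zero.mp (Nat.mul_ne_zero_iff.mp h).1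

lemma cnk_eq_coeff_prod (ε q : ℤ) (k : ℕ) (hk : 1 ≤ k) (N n : ℕ) (hn : n ≤ N) :
    cnk n k ε q = PowerSeries.coeff (R := ℤ) n (∏ r ∈ Finset.Icc 1 N, G (k * r) ε q) := by
  have hco : ∀ (l : ℕ →₀ ℕ), (∏ r ∈ Finset.Icc 1 N, PowerSeries.coeff (R := ℤ) (l r) (G (k * r) ε q))
      = if ∀ r ∈ Finset.Icc 1 N, (k * r) ∣ l r then
          ∏ r ∈ Finset.Icc 1 N, wt ε q (l r / (k * r)) else 0 := by
    intro l
    split_ifs with h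
    · exact Finset.prod_congr rfl fun r hr => by
        rw [G, coeff_mk, if_pos (h r hr)]
    · push_neg at h
      obtain ⟨r, hr, hr'⟩ := h
      exact Finset.prod_eq_zero hr (by rw [G, coeff_mk, if_neg hr'])
  rw [PowerSeries.coeff_prod]
  simp only [hco]
  rw [← Finset.sum_filter, cnk, ← Finset.sum_filter]
  refine Finset.sum_bij' (fun ν _ => pToF ν)
    (fun l hl =>
      { parts := ∑ r ∈ Finset.Icc 1 N, Multiset.replicate (l r / r) r
        parts_pos := by
          intro i hi
          rw [Multiset.mem_sum] at hi
          obtain ⟨r, hr, hir⟩ := hi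
          rw [Multiset.eq_of_mem_replicate hir]
          exact (Finset.mem_Icc.mp hr).1
        parts_sum := by
          simp only [Finset.mem_filter, mem_finsuppAntidiag] at hl
          obtain ⟨⟨hsum, hsupp⟩, hdvd⟩ := hl
          simp_rw [Multiset.sum_sum, Multiset.sum_replicate, smul_eq_mul]
          rw [← hsum]
          exact Finset.sum_congr rfl fun r hr =>
            Nat.div_mul_cancel ((dvd_mul_left r k).trans (hdvd r hr)) })
    ?_ ?_ ?_ ?_ ?_
  · -- maps into the finsupp set
    intro ν hν
    simp only [Finset.mem_filter, Finset.mem_univ, true_and] at hν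
    have hsub : ν.parts.toFinset ⊆ Finset.Icc 1 N := by
      intro i hi
      rw [Multiset.mem_toFinset] at hi
      rw [Finset.mem_Icc]
      have h1 := ν.parts_pos hi
      have h2 := Multiset.le_sum_of_mem hi
      rw [ν.parts_sum] at h2
      omega
    simp only [Finset.mem_filter, mem_finsuppAntidiag]
    refine ⟨⟨?_, hsub⟩, fun r _ => mul_dvd_mul (hν r) dvd_rfl⟩
    have h2 := Finset.sum_multiset_count_of_subset ν.parts _ hsub
    rw [ν.parts_sum] at h2
    exact Eq.trans (Finset.sum_congr rfl fun r _ => by simp [pToF, smul_eq_mul]) h2.symm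
  · -- maps back into the partition set
    intro l hl
    simp only [Finset.mem_filter, Finset.mem_univ, true_and]
    intro i
    simp only [Finset.mem_filter, mem_finsuppAntidiag] at hl
    obtain ⟨⟨hsum, hsupp⟩, hdvd⟩ := hl
    simp_rw [Multiset.count_sum', Multiset.count_replicate, Finset.sum_ite_eq']
    split_ifs with h
    · obtain ⟨m, hm⟩ := hdvd i h
      have hi : 0 < i := (Finset.mem_Icc.mp h).1
      exact ⟨m, by rw [hm, mul_comm k i, mul_assoc, Nat.mul_div_cancel_left _ hi]⟩
    · exact dvd_zero k
  · -- left inverse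
    intro ν hν
    apply Nat.Partition.ext
    ext i
    simp_rw [Multiset.count_sum', Multiset.count_replicate, Finset.sum_ite_eq']
    split_ifs with h
    · simp only [pToF, Finsupp.coe_mk]
      exact Nat.mul_div_cancel _ ((Finset.mem_Icc.mp h).1)
    · symm
      rw [Multiset.count_eq_zero]
      intro hmem
      have h1 := ν.parts_pos hmem
      have h2 := Multiset.le_sum_of_mem hmem
      rw [ν.parts_sum] at h2
      rw [Finset.mem_Icc] at h
      omega
  · -- right inverse
    intro l hl
    simp only [Finset.mem_filter, mem_finsuppAntidiag] at hl
    obtain ⟨⟨hsum, hsupp⟩, hdvd⟩ := hl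
    ext i
    simp only [pToF, Finsupp.coe_mk]
    simp_rw [Multiset.count_sum', Multiset.count_replicate, Finset.sum_ite_eq']
    split_ifs with h
    · exact Nat.div_mul_cancel ((dvd_mul_left i k).trans (hdvd i h))
    · rw [zero_mul]
      symm
      rw [← Finsupp.notMem_support_iff]
      exact fun hc => h (hsupp hc)
  · -- weights agree
    intro ν hν
    simp only [Finset.mem_filter, Finset.mem_univ, true_and] at hν
    have hfac : ∀ i, (if 0 < Multiset.count i ν.parts then
          q ^ (Multiset.count i ν.parts / k) - ε * q ^ (Multiset.count i ν.parts / k - 1) else 1)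
        = wt ε q (Multiset.count i ν.parts / k) := by
      intro i
      rcases Nat.eq_zero_or_pos (Multiset.count i ν.parts) with h | h
      · rw [h, if_neg (lt_irrefl 0), Nat.zero_div, wt, if_pos rfl]
      · have h' : Multiset.count i ν.parts / k ≠ 0 := by
          obtain ⟨m, hm⟩ := hν i
          rw [hm, Nat.mul_div_cancel_left _ hk]
          intro hc
          rw [hc, mul_zero] at hm
          omega
        rw [if_pos h, wt, if_neg h']
    calc (∏ i ∈ Finset.range (n + 1), if 0 < Multiset.count i ν.parts then
            q ^ (Multiset.count i ν.parts / k) - ε * q ^ (Multiset.count i ν.parts / k - 1) else 1)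
        = ∏ i ∈ Finset.range (n + 1), wt ε q (Multiset.count i ν.parts / k) :=
          Finset.prod_congr rfl fun i _ => hfac i
      _ = ∏ i ∈ Finset.range (N + 1), wt ε q (Multiset.count i ν.parts / k) := by
          refine Finset.prod_subset (Finset.range_subset_range.mpr (by omega)) ?_
          intro i hi hni
          rw [Finset.mem_range] at hi hni
          have hc : Multiset.count i ν.parts = 0 := by
            rw [Multiset.count_eq_zero]
            intro hmem
            have h2 := Multiset.le_sum_of_mem hmem
            rw [ν.parts_sum] at h2
            omega
          rw [hc, Nat.zero_div, wt, if_pos rfl]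
      _ = ∏ i ∈ Finset.Icc 1 N, wt ε q (Multiset.count i ν.parts / k) := by
          refine (Finset.prod_subset (fun i hi => ?_) ?_).symm
          · rw [Finset.mem_Icc] at hi
            rw [Finset.mem_range]
            omega
          · intro i hi hni
            rw [Finset.mem_range] at hi
            rw [Finset.mem_Icc] at hni
            have hi0 : i = 0 := by omega
            have hc : Multiset.count i ν.parts = 0 := by
              rw [Multiset.count_eq_zero]
              intro hmem
              have := ν.parts_pos hmem
              omega
            rw [hc, Nat.zero_div, wt, if_pos rfl]
      _ = ∏ r ∈ Finset.Icc 1 N, wt ε q ((pToF ν) r / (k * r)) := by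
          refine Finset.prod_congr rfl fun r hr => ?_
          have hr1 : 0 < r := (Finset.mem_Icc.mp hr).1
          simp only [pToF, Finsupp.coe_mk]
          rw [Nat.mul_div_mul_right _ _ hr1]

lemma G_mul (d : ℕ) (hd : 0 < d) (ε q : ℤ) :
    G d ε q * (1 - PowerSeries.C (R := ℤ) q * PowerSeries.X ^ d) = 1 - PowerSeries.C (R := ℤ) ε * PowerSeries.X ^ d := by
  ext n
  have hG : ∀ m, coeff (R := ℤ) m (G d ε q) = if d ∣ m then wt ε q (m / d) else 0 :=
    fun m => coeff_mk _ _
  rw [mul_sub, mul_one, map_sub, map_sub, show G d ε q * (PowerSeries.C (R := ℤ) q * PowerSeries.X ^ d)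
      = (G d ε q * PowerSeries.X ^ d) * PowerSeries.C (R := ℤ) q by ring,
    PowerSeries.coeff_mul_C, PowerSeries.coeff_mul_X_pow', PowerSeries.coeff_C_mul,
    PowerSeries.coeff_X_pow, PowerSeries.coeff_one, hG]
  by_cases h0 : n = 0
  · subst h0
    rw [if_pos (dvd_zero d), if_neg (by omega : ¬ d ≤ 0), if_pos rfl,
      if_neg (by omega : ¬ (0 = d))]
    simp [wt]
  by_cases hdvd : d ∣ n
  · obtain ⟨m, rfl⟩ := hdvd
    have hm : 0 < m := by
      rcases Nat.eq_zero_or_pos m with h | h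
      · subst h; simp at h0
      · exact h
    rw [if_pos (dvd_mul_right d m), Nat.mul_div_cancel_left m hd,
      if_pos (Nat.le_mul_of_pos_right d hm), hG,
      (by rw [Nat.mul_sub_one] : d * m - d = d * (m - 1)),
      if_pos (dvd_mul_right d (m - 1)), Nat.mul_div_cancel_left _ hd,
      if_neg h0]
    by_cases hm1 : m = 1
    · subst hm1
      rw [if_pos (by omega)]
      simp [wt]
    · rw [if_neg (by intro h; exact hm1 (Nat.eq_of_mul_eq_mul_left hd (by omega : d * m = d * 1)))]
      rw [wt, wt, if_neg hm.ne', if_neg (by omega : ¬ (m - 1 = 0))]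
      have e1 : q ^ m = q ^ (m - 1) * q := by rw [← pow_succ]; congr 1; omega
      have e2 : q ^ (m - 1) = q ^ (m - 2) * q := by rw [← pow_succ]; congr 1; omega
      rw [(by omega : m - 1 - 1 = m - 2), e1, e2]; ring
  · rw [if_neg hdvd, if_neg h0, if_neg (show ¬ n = d by intro h; exact hdvd (by rw [h]))]
    split_ifs with hle
    · rw [hG, if_neg]
      · ring
      · intro hc
        have := Nat.dvd_add hc (dvd_refl d)
        rw [Nat.sub_add_cancel hle] at this
        exact hdvd this
    · ring

/-- Generating function identity
`Σ_{n≥0} c_{n,k}(q) tⁿ = ∏_{r≥1} (1 - ε t^{kr})/(1 - q t^{kr})`, stated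
coefficient-wise as a formal power series identity: for every `N`, the `N`-th
coefficient of `(Σₙ c_{n,k}(q) tⁿ)·∏_{r=1}^{N}(1 - q t^{kr})` agrees with that of
`∏_{r=1}^{N}(1 - ε t^{kr})` (factors with `kr > N` do not affect coefficient `N`). -/
theorem cnk_generating_function (ε q : ℤ) (hε : ε = 1 ∨ ε = -1)
    (k : ℕ) (hk : 1 ≤ k) :
    ∀ N : ℕ,
      PowerSeries.coeff (R := ℤ) N
        ((PowerSeries.mk fun n => cnk n k ε q) *
          ∏ r ∈ Finset.Icc 1 N, (1 - PowerSeries.C (R := ℤ) q * PowerSeries.X ^ (k * r))) =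
      PowerSeries.coeff (R := ℤ) N
        (∏ r ∈ Finset.Icc 1 N, (1 - PowerSeries.C (R := ℤ) ε * PowerSeries.X ^ (k * r))) := by
  intro N
  have key : (∏ r ∈ Finset.Icc 1 N, G (k * r) ε q) *
        (∏ r ∈ Finset.Icc 1 N, (1 - PowerSeries.C (R := ℤ) q * PowerSeries.X ^ (k * r)))
      = ∏ r ∈ Finset.Icc 1 N, (1 - PowerSeries.C (R := ℤ) ε * PowerSeries.X ^ (k * r)) := by
    rw [← Finset.prod_mul_distrib]
    refine Finset.prod_congr rfl fun r hr => ?_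
    have hr1 : 0 < r := (Finset.mem_Icc.mp hr).1
    exact G_mul (k * r) (Nat.mul_pos hk hr1) ε q
  rw [← key, PowerSeries.coeff_mul, PowerSeries.coeff_mul]
  refine Finset.sum_congr rfl fun p hp => ?_
  rw [Finset.HasAntidiagonal.mem_antidiagonal] at hp
  rw [PowerSeries.coeff_mk, cnk_eq_coeff_prod ε q k hk N p.1 (by omega)]
end

section
/- For ε = ±1, the generating function for the number c_n(q) of irreducible characters of GL_n(εq) satisfies Σ_{n≥0} c_n(q) tⁿ = ∏_{r=1}^{∞} (1 − ε tʳ)/(1 − q tʳ), where c_n(q) := Σ over partitions ν = (1^{n₁}2^{n₂}⋯) of n of ∏_{nᵢ>0}(q^{nᵢ} − ε q^{nᵢ−1}). -/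
open scoped BigOperators Classical

section Aux

open Finset PowerSeries

/-- Coefficients of a product of "multiplicity-weighted" series over part sizes are sums
over partitions. Adapted from the proof of Euler's partition theorem in the Archive. -/
lemma key_gf (n : ℕ) (s : Finset ℕ) (hs : ∀ i ∈ s, 0 < i) (f : ℕ → ℤ) :
    PowerSeries.coeff (R := ℤ) n (∏ i ∈ s, PowerSeries.mk fun d => if i ∣ d then f (d / i) else 0) =
    ∑ p ∈ Finset.univ.filter (fun p : n.Partition => ∀ j ∈ p.parts, j ∈ s),
        ∏ i ∈ s, f (p.parts.count i) := by
  rw [PowerSeries.coeff_prod]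
  have hcoeff : ∀ l : ℕ →₀ ℕ,
      (∏ i ∈ s, PowerSeries.coeff (R := ℤ) (l i)
        (PowerSeries.mk fun d => if i ∣ d then f (d / i) else 0)) =
      if ∀ i ∈ s, i ∣ l i then ∏ i ∈ s, f (l i / i) else 0 := by
    intro l
    simp_rw [PowerSeries.coeff_mk]
    split_ifs with h
    · exact Finset.prod_congr rfl fun i hi => if_pos (h i hi)
    · push_neg at h
      obtain ⟨i, hi, hd⟩ := h
      exact Finset.prod_eq_zero hi (if_neg hd)
  rw [Finset.sum_congr rfl fun l _ => hcoeff l, ← Finset.sum_filter]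
  symm
  refine Finset.sum_bij'
    (i := fun p _ =>
      (⟨Finset.filter (fun i => i ≠ 0) p.parts.toFinset,
        fun i => p.parts.count i * i,
        fun a => by
          simp only [ne_eq, mul_eq_zero, Multiset.count_eq_zero]
          rw [not_or, not_not]
          simp only [Multiset.mem_toFinset, not_not, mem_filter]⟩ : ℕ →₀ ℕ))
    (j := fun l hl => ⟨∑ i ∈ s, Multiset.replicate (l i / i) i, ?_, ?_⟩)
    ?_ ?_ ?_ ?_ ?_
  · -- parts positive
    intro i hi
    simp only [Multiset.mem_sum] at hi
    obtain ⟨t, ht, hz⟩ := hi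
    rw [Multiset.eq_of_mem_replicate hz]
    exact hs t ht
  · -- parts sum = n
    simp only [mem_filter, mem_finsuppAntidiag] at hl
    simp_rw [Multiset.sum_sum, Multiset.sum_replicate, Nat.nsmul_eq_mul]
    rw [← hl.1.1]
    exact Finset.sum_congr rfl fun i hi => Nat.div_mul_cancel (hl.2 i hi)
  · -- hi : image of partition is in finsupp set
    intro p hp
    simp only [mem_filter, mem_univ, true_and] at hp
    simp only [mem_filter, mem_finsuppAntidiag, Finsupp.coe_mk]
    refine ⟨⟨?_, ?_⟩, fun i hi => dvd_mul_left i (p.parts.count i)⟩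
    · conv_rhs => rw [← p.parts_sum]
      rw [Finset.sum_multiset_count_of_subset _ s
        (fun i => by simp only [Multiset.mem_toFinset]; exact hp i)]
      simp only [smul_eq_mul]
    · intro i hi
      simp only [mem_filter, Multiset.mem_toFinset, ne_eq] at hi
      exact hp i hi.1
  · -- hj : image of finsupp is in partition set
    intro l hl
    simp only [mem_filter, mem_univ, true_and]
    intro j hj
    simp only [Multiset.mem_sum] at hj
    obtain ⟨t, ht, hz⟩ := hj
    rwa [Multiset.eq_of_mem_replicate hz]
  · -- left_inv : j (i p) = p
    intro p hp
    simp only [mem_filter, mem_univ, true_and] at hp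
    apply Nat.Partition.ext
    dsimp only [Finsupp.coe_mk]
    ext a
    simp_rw [Multiset.count_sum', Multiset.count_replicate, Finset.sum_ite_eq']
    split_ifs with h
    · rw [Nat.mul_div_cancel _ (hs a h)]
    · exact (Multiset.count_eq_zero.mpr fun ha => h (hp a ha)).symm
  · -- right_inv : i (j l) = l
    intro l hl
    simp only [mem_filter, mem_finsuppAntidiag] at hl
    ext a
    dsimp only [Finsupp.coe_mk]
    simp_rw [Multiset.count_sum', Multiset.count_replicate, Finset.sum_ite_eq']
    split_ifs with h
    · exact Nat.div_mul_cancel (hl.2 a h)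
    · rw [zero_mul]
      exact (Finsupp.notMem_support_iff.mp fun hc => h (hl.1.2 hc)).symm
  · -- values agree
    intro p hp
    refine Finset.prod_congr rfl fun i hi => ?_
    dsimp only [Finsupp.coe_mk]
    rw [Nat.mul_div_cancel _ (hs i hi)]

/-- The per-size generating factor satisfies `F i * (1 - q X^i) = 1 - ε X^i`. -/
lemma factor_eq (ε q : ℤ) (i : ℕ) (hi : 0 < i) :
    (PowerSeries.mk fun d => if i ∣ d then
        (if d / i = 0 then 1 else q ^ (d / i) - ε * q ^ (d / i - 1)) else 0) *
      (1 - PowerSeries.C (R := ℤ) q * PowerSeries.X ^ i) =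
    1 - PowerSeries.C (R := ℤ) ε * PowerSeries.X ^ i := by
  set A : PowerSeries ℤ := PowerSeries.mk fun d => if i ∣ d then
      (if d / i = 0 then 1 else q ^ (d / i) - ε * q ^ (d / i - 1)) else 0 with hA
  have key : A * (1 - PowerSeries.C (R := ℤ) q * PowerSeries.X ^ i)
      = A - PowerSeries.C (R := ℤ) q * A * PowerSeries.X ^ i := by ring
  rw [key]
  ext d
  rw [map_sub, map_sub, PowerSeries.coeff_mul_X_pow', hA]
  simp only [PowerSeries.coeff_mk, PowerSeries.coeff_one, PowerSeries.coeff_C_mul,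
    PowerSeries.coeff_X_pow, mul_ite, mul_one, mul_zero]
  by_cases hdi : i ∣ d
  · obtain ⟨m, rfl⟩ := hdi
    rw [if_pos (Dvd.intro m rfl), Nat.mul_div_cancel_left m hi]
    match m with
    | 0 =>
      rw [Nat.mul_zero]
      simp [hi.ne, Nat.not_le.mpr hi]
    | 1 =>
      rw [if_neg one_ne_zero, pow_one, pow_zero, mul_one, if_pos (by omega), mul_one,
        Nat.sub_self, if_pos (dvd_zero i), Nat.zero_div, if_pos rfl,
        if_neg (by omega), if_pos rfl]
      ring
    | (m + 2) =>
      have h1 : i ≤ i * (m + 2) := by nlinarith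
      have h2 : i * (m + 2) - i = i * (m + 1) := by ring_nf; omega
      rw [if_neg (by omega), if_pos h1, h2, if_pos (Dvd.intro (m+1) rfl),
        Nat.mul_div_cancel_left _ hi, if_neg (by omega),
        if_neg (by nlinarith), if_neg (by nlinarith)]
      have e1 : q ^ (m + 2) = q * q ^ (m + 1) := by ring
      have e2 : q ^ (m + 2 - 1) = q ^ (m + 1) := by norm_num
      have e3 : q ^ (m + 1) = q * q ^ m := by ring
      have e4 : q ^ (m + 1 - 1) = q ^ m := by norm_num
      rw [e1, e2, e3, e4]
      ring
  · have hd0 : d ≠ 0 := fun h => hdi (h ▸ dvd_zero i)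
    have hdni : d ≠ i := fun h => hdi (h ▸ dvd_refl i)
    rw [if_neg hdi, if_neg hd0, if_neg hdni]
    by_cases h1 : i ≤ d
    · have h2 : ¬ i ∣ d - i := fun h => hdi (by
        have h3 := Nat.dvd_add h (dvd_refl i)
        rwa [Nat.sub_add_cancel h1] at h3)
      simp [if_pos h1, if_neg h2]
      exact fun h => absurd (h.resolve_left hdi) (by omega)
    · simp [if_neg h1]

/-- `cnk n 1 ε q` is the coefficient of the truncated product of the `F i`. -/
lemma cnk_coeff (ε q : ℤ) (n N : ℕ) (hn : n ≤ N) :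
    PowerSeries.coeff (R := ℤ) n (∏ i ∈ Finset.Icc 1 N, PowerSeries.mk fun d => if i ∣ d then
        (if d / i = 0 then 1 else q ^ (d / i) - ε * q ^ (d / i - 1)) else 0) =
    cnk n 1 ε q := by
  have hs : ∀ i ∈ Finset.Icc 1 N, 0 < i := fun i hi => (Finset.mem_Icc.mp hi).1
  rw [key_gf n (Finset.Icc 1 N) hs (fun m => if m = 0 then 1 else q ^ m - ε * q ^ (m - 1))]
  rw [cnk]
  have hparts : ∀ p : n.Partition, ∀ j ∈ p.parts, j ∈ Finset.Icc 1 N := by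
    intro p j hj
    rw [Finset.mem_Icc]
    refine ⟨p.parts_pos hj, le_trans ?_ hn⟩
    conv_rhs => rw [← p.parts_sum]
    exact Multiset.le_sum_of_mem hj
  rw [Finset.filter_true_of_mem (fun p _ => hparts p)]
  refine Finset.sum_congr rfl fun p _ => ?_
  rw [if_pos (fun i => one_dvd _)]
  -- both products equal the product over the support
  have hterm : ∀ A : Finset ℕ, (∀ j ∈ p.parts, j ∈ A) →
      (∏ i ∈ A, (fun m => if m = 0 then (1:ℤ) else q ^ m - ε * q ^ (m - 1))
          (p.parts.count i)) =
      ∏ i ∈ p.parts.toFinset,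
        (fun m => if m = 0 then (1:ℤ) else q ^ m - ε * q ^ (m - 1))
          (p.parts.count i) := by
    intro A hA
    refine (Finset.prod_subset (fun i hi => hA i (Multiset.mem_toFinset.mp hi))
      fun i _ hi => ?_).symm
    rw [Multiset.count_eq_zero_of_notMem (fun hc => hi (Multiset.mem_toFinset.mpr hc))]
    simp
  rw [hterm _ (hparts _)]
  have hrange : ∀ j ∈ p.parts, j ∈ Finset.range (n + 1) := by
    intro j hj
    rw [Finset.mem_range, Nat.lt_succ_iff]
    conv_rhs => rw [← p.parts_sum]
    exact Multiset.le_sum_of_mem hj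
  rw [show (∏ i ∈ Finset.range (n + 1),
      if 0 < Multiset.count i p.parts then
        q ^ (Multiset.count i p.parts / 1) -
          ε * q ^ (Multiset.count i p.parts / 1 - 1)
      else 1) =
      ∏ i ∈ Finset.range (n + 1),
        (fun m => if m = 0 then (1:ℤ) else q ^ m - ε * q ^ (m - 1))
          (p.parts.count i) from
    Finset.prod_congr rfl fun i _ => by
      simp only [Nat.div_one]
      rcases Nat.eq_zero_or_pos (Multiset.count i p.parts) with h | h
      · simp [h]
      · rw [if_pos h, if_neg h.ne']]
  rw [hterm _ hrange]

end Aux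

/-- Generating function for `c_n(q) = c_{n,1}(q)`, the number of irreducible
characters of `GL_n(εq)`:
`Σ_{n≥0} c_n(q) tⁿ = ∏_{r≥1} (1 - ε tʳ)/(1 - q tʳ)`, stated coefficient-wise. -/
theorem cn_generating_function (ε q : ℤ) (hε : ε = 1 ∨ ε = -1) :
    ∀ N : ℕ,
      PowerSeries.coeff (R := ℤ) N
        ((PowerSeries.mk fun n => cnk n 1 ε q) *
          ∏ r ∈ Finset.Icc 1 N, (1 - PowerSeries.C (R := ℤ) q * PowerSeries.X ^ r)) =
      PowerSeries.coeff (R := ℤ) N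
        (∏ r ∈ Finset.Icc 1 N, (1 - PowerSeries.C (R := ℤ) ε * PowerSeries.X ^ r)) := by
  intro N
  set F : ℕ → PowerSeries ℤ := fun i => PowerSeries.mk fun d => if i ∣ d then
      (if d / i = 0 then 1 else q ^ (d / i) - ε * q ^ (d / i - 1)) else 0 with hF
  have hprod : (∏ r ∈ Finset.Icc 1 N, (1 - PowerSeries.C (R := ℤ) ε * PowerSeries.X ^ r)) =
      (∏ r ∈ Finset.Icc 1 N, F r) *
        ∏ r ∈ Finset.Icc 1 N, (1 - PowerSeries.C (R := ℤ) q * PowerSeries.X ^ r) := by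
    rw [← Finset.prod_mul_distrib]
    exact (Finset.prod_congr rfl fun i hi =>
      factor_eq ε q i (Finset.mem_Icc.mp hi).1).symm
  rw [hprod, PowerSeries.coeff_mul, PowerSeries.coeff_mul]
  refine Finset.sum_congr rfl fun ab hab => ?_
  rw [Finset.HasAntidiagonal.mem_antidiagonal] at hab
  congr 1
  rw [PowerSeries.coeff_mk, cnk_coeff ε q ab.1 N (by omega)]
end
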